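/- Any positive semidefinite Hermitian Toeplitz matrix T ∈ ℂ^{n×n} of rank r ≤ n admits a Vandermonde decomposition T = U R U*, where U ∈ ℂ^{n×r} has columns u_j with entries (u_j)_l = e^{i2π f_j l} for distinct frequencies f_j ∈ [0,1), and R = diag(b_1, …, b_r) with b_j > 0 real. -/

import Mathlib

open Matrix ComplexOrder Real

namespace CF10

variable {N : Type*} [Fintype N] [DecidableEq N]

lemma mul_left_cancel_det {X A B : Matrix N N ℂ} (h : IsUnit X.det) (hXA : X * A = X * B) :
    A = B := by
  have := congrArg (fun Y => X⁻¹ * Y) hXA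
  simpa [← Matrix.mul_assoc, Matrix.nonsing_inv_mul _ h] using this

lemma eval_det_one_sub (M : Matrix N N ℂ) (z : ℂ) :
    Polynomial.eval z (M.charpolyRev) = (1 - z • M).det := by
  unfold Matrix.charpolyRev
  rw [← Polynomial.coe_evalRingHom, RingHom.map_det]
  congr 1
  ext i j
  simp only [RingHom.mapMatrix_apply, Matrix.map_apply, Matrix.sub_apply, Matrix.smul_apply,
    Matrix.one_apply, smul_eq_mul, Polynomial.eval_sub, Polynomial.eval_mul, Polynomial.eval_X,
    Polynomial.eval_C, map_sub]
  by_cases h : i = j <;>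
    simp only [h, if_true, if_false, Polynomial.coe_evalRingHom, Polynomial.eval_mul,
      Polynomial.eval_X, Polynomial.eval_C, Polynomial.eval_one, Polynomial.eval_zero] <;> ring

lemma exists_unimodular (M : Matrix N N ℂ) :
    ∃ z : ℂ, ‖z‖ = 1 ∧ IsUnit (1 - z • M).det := by
  have hq : M.charpolyRev ≠ 0 := by
    intro h
    have h2 := Matrix.eval_charpolyRev (M := M)
    rw [h] at h2; simp at h2
  have hfin : Set.Finite {x : ℂ | Polynomial.IsRoot M.charpolyRev x} :=
    Polynomial.finite_setOf_isRoot hq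
  set f : ℝ → ℂ := fun t => Complex.exp (t * Complex.I) with hf
  have hinj : Set.InjOn f (Set.Ico 0 (2 * π)) := by
    intro s hs t ht h
    rw [hf] at h
    simp only at h
    rw [Complex.exp_eq_exp_iff_exists_int] at h
    obtain ⟨k, hk⟩ := h
    have him : s = t + k * (2 * π) := by
      have := congrArg Complex.im hk
      simpa using this
    obtain ⟨hs0, hs1⟩ := hs
    obtain ⟨ht0, ht1⟩ := ht
    have hπ := Real.pi_pos
    have hk0 : k = 0 := by
      rcases lt_trichotomy k 0 with h | h | h
      · have : (k : ℝ) ≤ -1 := by exact_mod_cast (by omega : k ≤ -1)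
        nlinarith
      · exact h
      · have : (1 : ℝ) ≤ k := by exact_mod_cast h
        nlinarith
    rw [hk0] at him; simpa using him
  have hbad : (Set.Ico (0:ℝ) (2*π) ∩ f ⁻¹' {x : ℂ | Polynomial.IsRoot M.charpolyRev x}).Finite := by
    apply Set.Finite.of_finite_image (f := f)
    · exact hfin.subset (by rintro x ⟨t, ⟨-, ht⟩, rfl⟩; exact ht)
    · exact hinj.mono Set.inter_subset_left
  have hico : (Set.Ico (0:ℝ) (2*π)).Infinite := Set.Ico_infinite (by positivity)
  obtain ⟨t, ht⟩ := (hico.diff hbad).nonempty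
  refine ⟨f t, Complex.norm_exp_ofReal_mul_I t, ?_⟩
  rw [isUnit_iff_ne_zero]
  intro hdet
  apply ht.2
  refine ⟨ht.1, ?_⟩
  simp only [Set.mem_preimage, Set.mem_setOf_eq, Polynomial.IsRoot]
  rw [eval_det_one_sub, hdet]


lemma unitary_spectral' (M : Matrix N N ℂ) (hM : Mᴴ * M = 1)
    (z : ℂ) (hz1 : ‖z‖ = 1) (hzdet : IsUnit ((1 : Matrix N N ℂ) - z • M).det) :
    ∃ (W : Matrix N N ℂ) (lam : N → ℂ), Wᴴ * W = 1 ∧ W * Wᴴ = 1 ∧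
      (∀ j, ‖lam j‖ = 1) ∧ M = W * Matrix.diagonal lam * Wᴴ := by
  have hMM' : M * Mᴴ = 1 := mul_eq_one_comm.mp hM
  set w := (starRingEnd ℂ) z with hw
  have hwz : w * z = 1 := by
    rw [hw, mul_comm, Complex.mul_conj]
    norm_cast
    rw [Complex.normSq_eq_norm_sq, hz1]; norm_num
  have hzw : z * w = 1 := by rw [mul_comm]; exact hwz
  clear_value w
  set Nm := (1 : Matrix N N ℂ) - z • M with hNm
  set P := (1 : Matrix N N ℂ) + z • M with hP
  clear_value Nm P
  have hNmH : Nmᴴ = 1 - w • Mᴴ := by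
    rw [hNm, conjTranspose_sub, conjTranspose_smul, conjTranspose_one, hw, Complex.star_def]
  have hPH : Pᴴ = 1 + w • Mᴴ := by
    rw [hP, conjTranspose_add, conjTranspose_smul, conjTranspose_one, hw, Complex.star_def]
  have hNHdet : IsUnit Nmᴴ.det := by
    rw [Matrix.det_conjTranspose]; exact isUnit_star.mpr hzdet
  set H := Complex.I • (P * Nm⁻¹) with hH
  clear_value H
  -- H is Hermitian
  have hHerm : H.IsHermitian := by
    have h1 : Hᴴ = (-Complex.I) • (Nmᴴ⁻¹ * Pᴴ) := by
      rw [hH, conjTranspose_smul, conjTranspose_mul, Matrix.conjTranspose_nonsing_inv]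
      simp [Complex.star_def, Complex.conj_I]
    have key : Nmᴴ * Hᴴ * Nm = Nmᴴ * H * Nm := by
      have e1 : Nmᴴ * Hᴴ * Nm = (-Complex.I) • (Pᴴ * Nm) := by
        rw [h1, Matrix.mul_smul, Matrix.smul_mul]
        congr 1
        simp only [← Matrix.mul_assoc]
        rw [Matrix.mul_nonsing_inv _ hNHdet, one_mul]
      have e2 : Nmᴴ * H * Nm = Complex.I • (Nmᴴ * P) := by
        rw [hH, Matrix.mul_smul, Matrix.smul_mul]
        congr 1
        simp only [Matrix.mul_assoc]
        rw [Matrix.nonsing_inv_mul _ hzdet, Matrix.mul_one]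
      have e3 : Pᴴ * Nm = w • Mᴴ - z • M := by
        rw [hPH, hNm]
        simp only [mul_sub, sub_mul, add_mul, mul_add, one_mul, mul_one, Matrix.smul_mul,
          Matrix.mul_smul, smul_smul, hM]
        match_scalars <;> first
          | ring1
          | linear_combination hwz
          | linear_combination -hwz
          | linear_combination Complex.I * hwz
          | linear_combination (-Complex.I) * hwz
          | linear_combination w * hwz
      have e4 : Nmᴴ * P = z • M - w • Mᴴ := by
        rw [hNmH, hP]
        simp only [mul_sub, sub_mul, add_mul, mul_add, one_mul, mul_one, Matrix.smul_mul,
          Matrix.mul_smul, smul_smul, hM]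
        match_scalars <;> first
          | ring1
          | linear_combination hwz
          | linear_combination -hwz
          | linear_combination Complex.I * hwz
          | linear_combination (-Complex.I) * hwz
          | linear_combination w * hwz
      rw [e1, e2, e3, e4]
      match_scalars <;> ring1
    have : Hᴴ = H := by
      apply mul_left_cancel_det hNHdet
      have := congrArg (fun Y => Y * Nm⁻¹) key
      rwa [Matrix.mul_assoc (Nmᴴ * Hᴴ), Matrix.mul_nonsing_inv _ hzdet, Matrix.mul_one,
        Matrix.mul_assoc (Nmᴴ * H), Matrix.mul_nonsing_inv _ hzdet, Matrix.mul_one] at this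
    exact this
  -- spectral data
  set W : Matrix N N ℂ := (hHerm.eigenvectorUnitary : Matrix N N ℂ) with hWdef
  set μ : N → ℝ := hHerm.eigenvalues with hmu
  have hWW : Wᴴ * W = 1 := by
    simpa [hWdef, star_eq_conjTranspose] using
      (Matrix.mem_unitaryGroup_iff'.mp hHerm.eigenvectorUnitary.2)
  have hWW' : W * Wᴴ = 1 := mul_eq_one_comm.mp hWW
  have hspec : H = W * diagonal (fun j => (μ j : ℂ)) * Wᴴ := by
    have := hHerm.spectral_theorem
    simpa [hWdef, hmu, star_eq_conjTranspose, Function.comp_def] using this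
  set lam : N → ℂ := fun j => w * ((μ j : ℂ) - Complex.I) / ((μ j : ℂ) + Complex.I) with hlam
  clear_value lam
  have hmuI : ∀ j, ((μ j : ℂ) + Complex.I) ≠ 0 := by
    intro j h
    have := congrArg Complex.im h
    simp at this
  -- the relation (H + I•1) * M = w • (H - I•1)
  have hHN : H * Nm = Complex.I • P := by
    rw [hH, Matrix.smul_mul, Matrix.mul_assoc, Matrix.nonsing_inv_mul _ hzdet, Matrix.mul_one]
  have rel1 : (H + Complex.I • 1) * M = w • (H - Complex.I • 1) := by
    have e1 : H - z • (H * M) = Complex.I • 1 + (Complex.I * z) • M := by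
      have h5 := hHN
      rw [hNm, hP] at h5
      rw [mul_sub, Matrix.mul_one, Matrix.mul_smul, smul_add, smul_smul] at h5
      simpa using h5
    have e2 : z • (H * M) = H - (Complex.I • 1 + (Complex.I * z) • M) := by
      rw [← e1]; match_scalars <;> ring1
    have e3 : H * M = w • H - (w * Complex.I) • 1 - Complex.I • M := by
      calc H * M = (w * z) • (H * M) := by rw [hwz, one_smul]
      _ = w • (z • (H * M)) := by rw [smul_smul]
      _ = w • (H - (Complex.I • 1 + (Complex.I * z) • M)) := by rw [e2]
      _ = w • H - (w * Complex.I) • 1 - Complex.I • M := by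
          match_scalars <;> first
          | ring1
          | linear_combination hwz
          | linear_combination -hwz
          | linear_combination Complex.I * hwz
          | linear_combination (-Complex.I) * hwz
          | linear_combination w * hwz
    rw [add_mul, Matrix.smul_mul, Matrix.one_mul, e3]
    match_scalars <;> ring1
  -- same relation for W * diagonal lam * Wᴴ
  have hsmul1 : (Complex.I • 1 : Matrix N N ℂ) = diagonal (fun _ : N => Complex.I) := by
    ext i j
    rcases eq_or_ne i j with rfl | h
    · simp
    · simp [h, Matrix.one_apply_ne h]
  have hconj : ∀ A B : Matrix N N ℂ,
      (W * A * Wᴴ) * (W * B * Wᴴ) = W * (A * B) * Wᴴ := by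
    intro A B
    have h2 : Wᴴ * (W * (B * Wᴴ)) = B * Wᴴ := by rw [← Matrix.mul_assoc, hWW, Matrix.one_mul]
    simp only [Matrix.mul_assoc]
    rw [h2]
  have hIWW : (Complex.I • 1 : Matrix N N ℂ) = W * diagonal (fun _ : N => Complex.I) * Wᴴ := by
    rw [← hsmul1, Matrix.mul_smul, Matrix.mul_one, Matrix.smul_mul, hWW']
  have hHpI : H + Complex.I • 1 = W * diagonal (fun j => (μ j : ℂ) + Complex.I) * Wᴴ := by
    rw [hspec, hIWW, ← Matrix.add_mul, ← Matrix.mul_add, Matrix.diagonal_add]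
  have hHmI : H - Complex.I • 1 = W * diagonal (fun j => (μ j : ℂ) - Complex.I) * Wᴴ := by
    rw [hspec, hIWW, ← Matrix.sub_mul, ← Matrix.mul_sub, Matrix.diagonal_sub]
  have hsw : ∀ d : N → ℂ, w • (W * diagonal d * Wᴴ) = W * diagonal (fun j => w * d j) * Wᴴ := by
    intro d
    rw [show (fun j => w * d j) = w • d from rfl, Matrix.diagonal_smul, Matrix.mul_smul,
      Matrix.smul_mul]
  have harg : (fun j => ((μ j : ℂ) + Complex.I) * lam j)
      = fun j => w * ((μ j : ℂ) - Complex.I) := by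
    funext j
    rw [hlam]
    rw [mul_div_assoc', mul_comm ((μ j : ℂ) + Complex.I), mul_div_assoc,
      div_self (hmuI j), mul_one]
  have rel2 : (H + Complex.I • 1) * (W * diagonal lam * Wᴴ) = w • (H - Complex.I • 1) := by
    rw [hHpI, hHmI, hconj, Matrix.diagonal_mul_diagonal, hsw, harg]
  have hdetHpI : IsUnit (H + Complex.I • 1).det := by
    rw [hHpI, Matrix.det_mul, Matrix.det_mul, Matrix.det_diagonal]
    have hdWW : W.det * Wᴴ.det = 1 := by rw [← Matrix.det_mul, hWW']; exact Matrix.det_one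
    have h1 : IsUnit W.det := IsUnit.of_mul_eq_one _ hdWW
    have h2 : IsUnit Wᴴ.det := IsUnit.of_mul_eq_one _ (by rwa [mul_comm] at hdWW)
    have h3 : IsUnit (∏ j, ((μ j : ℂ) + Complex.I)) := by
      rw [isUnit_iff_ne_zero]
      exact Finset.prod_ne_zero_iff.mpr fun j _ => hmuI j
    exact (h1.mul h3).mul h2
  have hMeq : M = W * diagonal lam * Wᴴ := mul_left_cancel_det hdetHpI (by rw [rel1, rel2])
  refine ⟨W, lam, hWW, hWW', ?_, hMeq⟩
  intro j
  rw [hlam]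
  rw [norm_div, norm_mul]
  have h1 : ‖w‖ = 1 := by rw [hw]; simpa using hz1
  have h2 : ‖(μ j : ℂ) - Complex.I‖ = ‖(μ j : ℂ) + Complex.I‖ := by
    rw [Complex.norm_def, Complex.norm_def]
    congr 1
    simp [Complex.normSq_apply]
  rw [h1, h2, one_mul, div_self (norm_ne_zero_iff.mpr (hmuI j))]


lemma shift_unitary {m : ℕ} (a : Fin (m+1) → EuclideanSpace ℂ (Fin (m+1)))
    (hshift : ∀ k l : Fin m,
      (inner ℂ (a k.succ) (a l.succ) : ℂ) = inner ℂ (a k.castSucc) (a l.castSucc)) :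
    ∃ Mt : Matrix (Fin (m+1)) (Fin (m+1)) ℂ, Mtᴴ * Mt = 1 ∧
      ∀ k : Fin m, Mt *ᵥ (a k.castSucc) = a k.succ := by
  classical
  let E := EuclideanSpace ℂ (Fin (m+1))
  let φ : (Fin m → ℂ) →ₗ[ℂ] E :=
  { toFun := fun c => ∑ k, c k • a k.castSucc
    map_add' := fun c d => by simp [add_smul, Finset.sum_add_distrib]
    map_smul' := fun t c => by simp [smul_smul, Finset.smul_sum] }
  let ψ : (Fin m → ℂ) →ₗ[ℂ] E :=
  { toFun := fun c => ∑ k, c k • a k.succ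
    map_add' := fun c d => by simp [add_smul, Finset.sum_add_distrib]
    map_smul' := fun t c => by simp [smul_smul, Finset.smul_sum] }
  have hφ : ∀ c, φ c = ∑ k, c k • a k.castSucc := fun c => rfl
  have hψ : ∀ c, ψ c = ∑ k, c k • a k.succ := fun c => rfl
  have hip : ∀ c d, (inner ℂ (ψ c) (ψ d) : ℂ) = inner ℂ (φ c) (φ d) := by
    intro c d
    rw [hφ, hψ, hφ, hψ, sum_inner, sum_inner]
    refine Finset.sum_congr rfl fun k _ => ?_
    rw [inner_sum, inner_sum]
    refine Finset.sum_congr rfl fun l _ => ?_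
    rw [inner_smul_left, inner_smul_left, inner_smul_right, inner_smul_right, hshift]
  have hker : LinearMap.ker φ ≤ LinearMap.ker ψ := by
    intro c hc
    rw [LinearMap.mem_ker] at hc ⊢
    have h0 : (inner ℂ (ψ c) (ψ c) : ℂ) = 0 := by rw [hip, hc, inner_zero_right]
    exact inner_self_eq_zero.mp h0
  let L0 : LinearMap.range φ →ₗ[ℂ] E :=
    (Submodule.liftQ (LinearMap.ker φ) ψ hker).comp
      (φ.quotKerEquivRange.symm.toLinearMap)
  have hL0 : ∀ c : Fin m → ℂ, L0 ⟨φ c, LinearMap.mem_range_self _ c⟩ = ψ c := by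
    intro c
    have h1 : φ.quotKerEquivRange (Submodule.Quotient.mk c)
        = ⟨φ c, LinearMap.mem_range_self _ c⟩ := Subtype.ext (φ.quotKerEquivRange_apply_mk c)
    have h2 : φ.quotKerEquivRange.symm ⟨φ c, LinearMap.mem_range_self _ c⟩
        = Submodule.Quotient.mk c := by
      rw [← h1, LinearEquiv.symm_apply_apply]
    show (Submodule.liftQ (LinearMap.ker φ) ψ hker)
      (φ.quotKerEquivRange.symm.toLinearMap ⟨φ c, LinearMap.mem_range_self _ c⟩) = ψ c
    rw [LinearEquiv.coe_toLinearMap, h2, Submodule.liftQ_apply]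
  have hL0norm : ∀ x : LinearMap.range φ, ‖L0 x‖ = ‖x‖ := by
    rintro ⟨x, c, rfl⟩
    rw [hL0 c]
    have h0 : (inner ℂ (ψ c) (ψ c) : ℂ) = inner ℂ (φ c) (φ c) := hip c c
    rw [inner_self_eq_norm_sq_to_K, inner_self_eq_norm_sq_to_K] at h0
    have h1 : (‖ψ c‖^2 : ℝ) = ‖φ c‖^2 := by exact_mod_cast h0
    have h2 : ‖ψ c‖ = ‖φ c‖ := (sq_eq_sq₀ (norm_nonneg _) (norm_nonneg _)).mp h1
    exact h2
  let L : LinearMap.range φ →ₗᵢ[ℂ] E := ⟨L0, hL0norm⟩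
  let U : E →ₗᵢ[ℂ] E := L.extend
  have hUa : ∀ k : Fin m, U (a k.castSucc) = a k.succ := by
    intro k
    have hsingle : φ (Pi.single k 1) = a k.castSucc := by
      rw [hφ]
      simp [Pi.single_apply, ite_smul]
    have hsingle' : ψ (Pi.single k 1) = a k.succ := by
      rw [hψ]
      simp [Pi.single_apply, ite_smul]
    have e := congrArg U hsingle
    rw [← e]
    have e2 : U (φ (Pi.single k 1))
        = L ⟨φ (Pi.single k 1), LinearMap.mem_range_self _ _⟩ :=
      LinearIsometry.extend_apply L ⟨φ (Pi.single k 1), LinearMap.mem_range_self _ _⟩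
    rw [e2]
    show L0 _ = _
    rw [hL0, hsingle']
  -- matrix of U
  set Mt : Matrix (Fin (m+1)) (Fin (m+1)) ℂ :=
    Matrix.toEuclideanLin.symm U.toLinearMap with hMt
  have hMv : ∀ v : E, Mt *ᵥ (v : Fin (m+1) → ℂ) = (U v : Fin (m+1) → ℂ) := by
    intro v
    have h := Matrix.toEuclideanLin.apply_symm_apply U.toLinearMap
    calc Mt *ᵥ (v : Fin (m+1) → ℂ) = (Matrix.toEuclideanLin Mt v : Fin (m+1) → ℂ) := rfl
      _ = U v := by rw [hMt, h]; rfl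
  refine ⟨Mt, ?_, fun k => by rw [hMv, hUa]⟩
  ext k l
  have hcol : ∀ (j : Fin (m+1)) (p : Fin (m+1)),
      Mt p j = U (EuclideanSpace.single j 1) p := by
    intro j p
    have h2 := congrFun (hMv (EuclideanSpace.single j 1)) p
    rw [← h2]
    simp [Matrix.mulVec, dotProduct, EuclideanSpace.single_apply]
  have h1 : (inner ℂ (U (EuclideanSpace.single k 1)) (U (EuclideanSpace.single l 1)) : ℂ)
      = inner ℂ (EuclideanSpace.single k (1:ℂ)) (EuclideanSpace.single l (1:ℂ)) :=
    U.inner_map_map _ _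
  rw [PiLp.inner_apply, PiLp.inner_apply] at h1
  simp only [RCLike.inner_apply, EuclideanSpace.single_apply] at h1
  rw [Matrix.mul_apply, Matrix.one_apply]
  simp only [Matrix.conjTranspose_apply]
  calc ∑ p, star (Mt p k) * Mt p l
      = ∑ p, (starRingEnd ℂ) (U (EuclideanSpace.single k 1) p) * U (EuclideanSpace.single l 1) p := by
        refine Finset.sum_congr rfl fun p _ => ?_
        rw [hcol, hcol]
        rfl
    _ = (if k = l then 1 else 0) := by
        rw [show (∑ p, (starRingEnd ℂ) (U (EuclideanSpace.single k 1) p) * U (EuclideanSpace.single l 1) p)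
            = ∑ p, U (EuclideanSpace.single l 1) p * (starRingEnd ℂ) (U (EuclideanSpace.single k 1) p)
            from Finset.sum_congr rfl fun p _ => mul_comm _ _, h1]
        rcases eq_or_ne k l with rfl | h
        · simp
        · simp [h, Ne.symm h]



lemma endgame {n r : ℕ} (T : Matrix (Fin n) (Fin n) ℂ) (ν : Fin n → ℂ) (wt : Fin n → ℝ)
    (hwt : ∀ p, 0 ≤ wt p) (hν : ∀ p, ‖ν p‖ = 1)
    (hMI : ∀ k l, T k l = ∑ p, (wt p : ℂ) * ν p ^ (k:ℕ) * (starRingEnd ℂ) (ν p) ^ (l:ℕ))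
    (hrank : T.rank = r) :
    ∃ (f : Fin r → ℝ) (b : Fin r → ℝ),
      Function.Injective f ∧ (∀ j, f j ∈ Set.Ico (0 : ℝ) 1) ∧ (∀ j, 0 < b j) ∧
      T = (Matrix.of fun (l : Fin n) (j : Fin r) =>
            Complex.exp (Complex.I * (2 * π * f j * (l : ℕ)))) *
          Matrix.diagonal (fun j => ((b j : ℝ) : ℂ)) *
          (Matrix.of fun (l : Fin n) (j : Fin r) =>
            Complex.exp (Complex.I * (2 * π * f j * (l : ℕ))))ᴴ := by
  classical
  set c : ℂ → ℝ := fun μ => ∑ p ∈ Finset.univ.filter (fun p => ν p = μ), wt p with hc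
  set S : Finset ℂ := (Finset.univ.image ν).filter (fun μ => c μ ≠ 0) with hS
  have hcpos : ∀ μ ∈ S, 0 < c μ := by
    intro μ hμ
    rw [hS, Finset.mem_filter] at hμ
    exact lt_of_le_of_ne (Finset.sum_nonneg fun p _ => hwt p) (Ne.symm hμ.2)
  have hSabs : ∀ μ ∈ S, ‖μ‖ = 1 := by
    intro μ hμ
    rw [hS, Finset.mem_filter, Finset.mem_image] at hμ
    obtain ⟨⟨p, _, rfl⟩, -⟩ := hμ
    exact hν p
  have hgroup : ∀ k l : Fin n,
      T k l = ∑ μ ∈ S, (c μ : ℂ) * μ ^ (k:ℕ) * (starRingEnd ℂ) μ ^ (l:ℕ) := by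
    intro k l
    rw [hMI]
    have h1 : ∑ p, (wt p : ℂ) * ν p ^ (k:ℕ) * (starRingEnd ℂ) (ν p) ^ (l:ℕ)
        = ∑ μ ∈ Finset.univ.image ν, ∑ p ∈ Finset.univ.filter (fun p => ν p = μ),
            (wt p : ℂ) * ν p ^ (k:ℕ) * (starRingEnd ℂ) (ν p) ^ (l:ℕ) :=
      (Finset.sum_fiberwise_of_maps_to (fun p _ => Finset.mem_image_of_mem ν (Finset.mem_univ p)) _).symm
    have h2 : ∀ μ ∈ Finset.univ.image ν,
        ∑ p ∈ Finset.univ.filter (fun p => ν p = μ),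
            (wt p : ℂ) * ν p ^ (k:ℕ) * (starRingEnd ℂ) (ν p) ^ (l:ℕ)
        = (c μ : ℂ) * μ ^ (k:ℕ) * (starRingEnd ℂ) μ ^ (l:ℕ) := by
      intro μ _
      have h3 : ∀ p ∈ Finset.univ.filter (fun p => ν p = μ),
          (wt p : ℂ) * ν p ^ (k:ℕ) * (starRingEnd ℂ) (ν p) ^ (l:ℕ)
          = (wt p : ℂ) * (μ ^ (k:ℕ) * (starRingEnd ℂ) μ ^ (l:ℕ)) := by
        intro p hp
        rw [Finset.mem_filter] at hp
        rw [hp.2, mul_assoc]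
      rw [Finset.sum_congr rfl h3, ← Finset.sum_mul, hc]
      push_cast
      ring
    rw [h1, Finset.sum_congr rfl h2, hS]
    rw [Finset.sum_filter_of_ne]
    intro μ _ hne
    intro hc0
    apply hne
    rw [hc0]
    push_cast
    ring
  -- index the support
  set s0 := S.card with hs0
  set e0 : Fin s0 ≃ {x // x ∈ S} := S.equivFin.symm with he0
  set μf : Fin s0 → ℂ := fun j => (e0 j : ℂ) with hμf
  have hμinj : Function.Injective μf := fun j j' h => e0.injective (Subtype.ext h)
  have hsum : ∀ (F : ℂ → ℂ), ∑ μ ∈ S, F μ = ∑ j : Fin s0, F (μf j) := by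
    intro F
    rw [← Finset.sum_coe_sort S F]
    exact (Equiv.sum_comp e0 (fun x => F (x : ℂ))).symm
  have hμS : ∀ j, μf j ∈ S := fun j => (e0 j).2
  -- the Vandermonde-type matrix
  set Wv : Matrix (Fin n) (Fin s0) ℂ := Matrix.of (fun (p : Fin n) j => μf j ^ (p : ℕ)) with hWv
  have hdec : T = Wv * diagonal (fun j => (c (μf j) : ℂ)) * Wvᴴ := by
    ext k l
    rw [hgroup k l, hsum]
    rw [Matrix.mul_apply]
    refine Finset.sum_congr rfl fun j _ => ?_
    rw [Matrix.mul_diagonal, Matrix.conjTranspose_apply, hWv]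
    simp only [Matrix.of_apply, Complex.star_def, map_pow]
    ring
  -- rank computation
  have hrankWv : Wv.rank = s0 := by
    refine le_antisymm (by simpa using Wv.rank_le_card_width) ?_
    have hs0n : s0 ≤ n := by
      calc s0 = S.card := rfl
      _ ≤ (Finset.univ.image ν).card := Finset.card_filter_le _ _
      _ ≤ (Finset.univ : Finset (Fin n)).card := Finset.card_image_le
      _ = n := by simp
    set Em : Matrix (Fin s0) (Fin n) ℂ :=
      Matrix.of (fun j p => if (Fin.castLE hs0n j) = p then 1 else 0) with hEm
    have hEW : Em * Wv = (Matrix.vandermonde μf)ᵀ := by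
      ext j j'
      rw [Matrix.mul_apply]
      simp only [hEm, Matrix.of_apply, ite_mul, one_mul, zero_mul]
      rw [Finset.sum_ite_eq Finset.univ (Fin.castLE hs0n j)]
      simp [Matrix.vandermonde, hWv]
    have hdet : IsUnit (Em * Wv).det := by
      rw [hEW, Matrix.det_transpose, isUnit_iff_ne_zero]
      exact Matrix.det_vandermonde_ne_zero_iff.mpr hμinj
    have h1 : (Em * Wv).rank = s0 := by
      rw [Matrix.rank_of_isUnit _ ((Matrix.isUnit_iff_isUnit_det _).mpr hdet)]
      simp
    calc s0 = (Em * Wv).rank := h1.symm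
    _ ≤ Wv.rank := Matrix.rank_mul_le_right Em Wv
  have hs0r : s0 = r := by
    set Dh : Matrix (Fin s0) (Fin s0) ℂ :=
      diagonal (fun j => ((Real.sqrt (c (μf j)) : ℝ) : ℂ)) with hDh
    have hDD : Dh * Dhᴴ = diagonal (fun j => (c (μf j) : ℂ)) := by
      rw [hDh, Matrix.diagonal_conjTranspose, Matrix.diagonal_mul_diagonal]
      ext i j
      rcases eq_or_ne i j with rfl | h
      · simp only [Matrix.diagonal_apply_eq, Pi.star_apply, Complex.star_def,
          Complex.conj_ofReal, ← Complex.ofReal_mul, Real.mul_self_sqrt (hcpos _ (hμS i)).le]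
      · rw [Matrix.diagonal_apply_ne _ h, Matrix.diagonal_apply_ne _ h]
    have h2 : T = (Wv * Dh) * (Wv * Dh)ᴴ := by
      rw [Matrix.conjTranspose_mul, hdec, ← hDD]
      rw [Matrix.mul_assoc, Matrix.mul_assoc, Matrix.mul_assoc]
    have hdetDh : IsUnit Dh.det := by
      rw [hDh, Matrix.det_diagonal, isUnit_iff_ne_zero]
      refine Finset.prod_ne_zero_iff.mpr fun j _ => ?_
      have := hcpos _ (hμS j)
      simp only [ne_eq, Complex.ofReal_eq_zero]
      positivity
    have h3 : T.rank = Wv.rank := by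
      rw [h2, Matrix.rank_self_mul_conjTranspose, Matrix.rank_mul_eq_left_of_isUnit_det Dh Wv hdetDh]
    rw [← hrank, h3, hrankWv]
  -- frequencies
  have hfreq : ∀ j : Fin s0, ∃ ff : ℝ, ff ∈ Set.Ico (0:ℝ) 1 ∧
      Complex.exp (Complex.I * (2 * π * ff)) = μf j := by
    intro j
    have habs : ‖μf j‖ = 1 := hSabs _ (hμS j)
    set θ := (μf j).arg with hθ
    have h1 : Complex.exp (θ * Complex.I) = μf j := by
      have := Complex.norm_mul_exp_arg_mul_I (μf j)
      rwa [habs, Complex.ofReal_one, one_mul] at this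
    have hπ := Real.pi_pos
    have hle := Complex.arg_le_pi (μf j)
    have hgt := Complex.neg_pi_lt_arg (μf j)
    rcases le_or_gt 0 θ with h | h
    · refine ⟨θ / (2*π), ⟨by positivity, ?_⟩, ?_⟩
      · rw [div_lt_one (by positivity)]
        nlinarith
      · rw [← h1]
        congr 1
        push_cast
        have h2π : (2 * (π:ℝ)) ≠ 0 := by positivity
        rw [mul_comm]
        congr 1
        field_simp
    · refine ⟨θ / (2*π) + 1, ⟨?_, ?_⟩, ?_⟩
      · have hd : -(1:ℝ) < θ / (2*π) := by
          rw [lt_div_iff₀ (by positivity : (0:ℝ) < 2*π)]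
          nlinarith
        linarith
      · have : θ / (2*π) < 0 := div_neg_of_neg_of_pos h (by positivity)
        linarith
      · have h2 : Complex.I * (2 * (π:ℝ) * ((θ / (2 * π) + 1 : ℝ) : ℂ))
            = (θ:ℂ) * Complex.I + 2 * (π:ℝ) * Complex.I := by
          push_cast
          have h2π : ((π:ℂ)) ≠ 0 := by
            simpa using Real.pi_ne_zero
          field_simp
        rw [h2, Complex.exp_add, h1]
        have h3 : Complex.exp (2 * (π:ℝ) * Complex.I) = 1 := by
          simpa using Complex.exp_two_pi_mul_I
        push_cast at h3 ⊢
        rw [h3, mul_one]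
  choose fr hfr1 hfr2 using hfreq
  -- final assembly
  have q : Fin r ≃ Fin s0 := finCongr hs0r.symm
  refine ⟨fun j => fr (q j), fun j => c (μf (q j)), ?_, fun j => hfr1 (q j),
    fun j => hcpos _ (hμS (q j)), ?_⟩
  · intro j j' h
    change fr (q j) = fr (q j') at h
    have h2 := hfr2 (q j)
    rw [h, hfr2 (q j')] at h2
    exact q.injective (hμinj h2.symm)
  · ext k l
    have hVcol : ∀ (p : Fin n) (j : Fin r),
        Complex.exp (Complex.I * (2 * π * fr (q j) * (p : ℕ))) = μf (q j) ^ (p:ℕ) := by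
      intro p j
      rw [← hfr2 (q j), ← Complex.exp_nat_mul]
      congr 1
      push_cast
      ring
    rw [hgroup k l, hsum, Matrix.mul_apply]
    rw [← Equiv.sum_comp q (fun x => (c (μf x) : ℂ) * μf x ^ (k:ℕ) * (starRingEnd ℂ) (μf x) ^ (l:ℕ))]
    refine Finset.sum_congr rfl fun j _ => ?_
    rw [Matrix.mul_diagonal, Matrix.conjTranspose_apply]
    simp only [Matrix.of_apply]
    rw [hVcol, hVcol]
    simp only [Complex.star_def, map_pow]
    ring


lemma conj_mul_conj {N : Type*} [Fintype N] [DecidableEq N] (W A B : Matrix N N ℂ)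
    (hWW : Wᴴ * W = 1) : (W * A * Wᴴ) * (W * B * Wᴴ) = W * (A * B) * Wᴴ := by
  have h2 : Wᴴ * (W * (B * Wᴴ)) = B * Wᴴ := by rw [← Matrix.mul_assoc, hWW, Matrix.one_mul]
  simp only [Matrix.mul_assoc]
  rw [h2]

open scoped MatrixOrder in
lemma exists_herm_sqrt {N : Type*} [Fintype N] [DecidableEq N] (T : Matrix N N ℂ)
    (h : T.PosSemidef) : ∃ A : Matrix N N ℂ, A * A = T ∧ Aᴴ = A :=
  ⟨CFC.sqrt T, CFC.sqrt_mul_sqrt_self T h.nonneg, (CFC.sqrt_nonneg T).posSemidef.1⟩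

end CF10

open CF10 in
theorem stmt_10 (n r : ℕ) (T : Matrix (Fin n) (Fin n) ℂ)
    (hpsd : T.PosSemidef)
    (htoep : ∀ i j i' j' : Fin n, (i : ℤ) - (j : ℤ) = (i' : ℤ) - (j' : ℤ) → T i j = T i' j')
    (hrank : T.rank = r) (hr : r ≤ n) :
    ∃ (f : Fin r → ℝ) (b : Fin r → ℝ),
      Function.Injective f ∧ (∀ j, f j ∈ Set.Ico (0 : ℝ) 1) ∧ (∀ j, 0 < b j) ∧
      T = (Matrix.of fun (l : Fin n) (j : Fin r) =>
            Complex.exp (Complex.I * (2 * π * f j * (l : ℕ)))) *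
          Matrix.diagonal (fun j => (b j : ℂ)) *
          (Matrix.of fun (l : Fin n) (j : Fin r) =>
            Complex.exp (Complex.I * (2 * π * f j * (l : ℕ))))ᴴ := by
  classical
  rcases n with _ | m
  · exact endgame T (fun p => p.elim0) (fun p => p.elim0) (fun p => p.elim0)
      (fun p => p.elim0) (fun k _ => k.elim0) hrank
  -- n = m + 1
  obtain ⟨A, hAT, hAH⟩ := exists_herm_sqrt T hpsd
  set a : Fin (m+1) → EuclideanSpace ℂ (Fin (m+1)) := fun k => WithLp.toLp 2 (fun p => A p k) with ha'
  have haf : ∀ k p, a k p = A p k := fun k p => rfl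
  have hTa : ∀ k l, T k l = star (a k : Fin (m+1) → ℂ) ⬝ᵥ (a l : Fin (m+1) → ℂ) := by
    intro k l
    rw [← hAT, Matrix.mul_apply, dotProduct]
    refine Finset.sum_congr rfl fun p _ => ?_
    rw [Pi.star_apply, haf, haf]
    rw [← Matrix.conjTranspose_apply, hAH]
  have hinner : ∀ k l, (inner ℂ (a k) (a l) : ℂ) = T k l := by
    intro k l
    rw [hTa k l, PiLp.inner_apply, dotProduct]
    refine Finset.sum_congr rfl fun p _ => ?_
    rw [RCLike.inner_apply, Pi.star_apply]
    exact mul_comm _ _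
  have hshift : ∀ k l : Fin m,
      (inner ℂ (a k.succ) (a l.succ) : ℂ) = inner ℂ (a k.castSucc) (a l.castSucc) := by
    intro k l
    rw [hinner, hinner]
    apply htoep
    push_cast [Fin.val_succ, Fin.coe_castSucc]
    omega
  obtain ⟨Mt, hMt1, hMt2⟩ := shift_unitary a hshift
  -- powers
  have ha0 : ∀ (j : ℕ) (hj : j < m+1),
      (a ⟨j, hj⟩ : Fin (m+1) → ℂ) = (Mt ^ j) *ᵥ (a ⟨0, Nat.succ_pos m⟩ : Fin (m+1) → ℂ) := by
    intro j
    induction j with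
    | zero => intro hj; rw [pow_zero, Matrix.one_mulVec]
    | succ i ih =>
      intro hj
      have hi : i < m := by omega
      have hi1 : i < m + 1 := by omega
      have e1 : (⟨i+1, hj⟩ : Fin (m+1)) = (⟨i, hi⟩ : Fin m).succ := rfl
      have e2 : (⟨i, hi1⟩ : Fin (m+1)) = (⟨i, hi⟩ : Fin m).castSucc := rfl
      rw [e1, ← hMt2 ⟨i, hi⟩, ← e2, ih hi1, Matrix.mulVec_mulVec, ← pow_succ']
  obtain ⟨z, hz1, hzdet⟩ := exists_unimodular Mt
  obtain ⟨W, lam, hWW, hWW', hlamabs, hMdec⟩ := unitary_spectral' Mt hMt1 z hz1 hzdet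
  have hpow : ∀ j : ℕ, Mt ^ j = W * diagonal (fun p => lam p ^ j) * Wᴴ := by
    intro j
    induction j with
    | zero =>
      rw [pow_zero]
      have : diagonal (fun p : Fin (m+1) => lam p ^ (0:ℕ)) = 1 := by
        simp [Matrix.diagonal_one]
      rw [this, Matrix.mul_one, hWW']
    | succ i ih =>
      rw [pow_succ, ih, hMdec, conj_mul_conj _ _ _ hWW, Matrix.diagonal_mul_diagonal]
      have he : (fun p => lam p ^ i * lam p) = fun p => lam p ^ (i+1) := by
        funext p; rw [← pow_succ]
      rw [he]
  set a0 : Fin (m+1) → ℂ := (a ⟨0, Nat.succ_pos m⟩ : Fin (m+1) → ℂ) with ha0def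
  set g : Fin (m+1) → ℂ := Wᴴ *ᵥ a0 with hg
  set ν : Fin (m+1) → ℂ := fun p => star (lam p) with hν
  have hsg : star a0 ᵥ* W = star g := by
    rw [hg, Matrix.star_mulVec, Matrix.conjTranspose_conjTranspose]
  have hMI : ∀ k l : Fin (m+1), T k l
      = ∑ p, ((Complex.normSq (g p) : ℝ) : ℂ) * ν p ^ (k:ℕ) * (starRingEnd ℂ) (ν p) ^ (l:ℕ) := by
    intro k l
    have hB : (Mt ^ (k:ℕ))ᴴ * Mt ^ (l:ℕ)
        = W * diagonal (fun p => ν p ^ (k:ℕ) * lam p ^ (l:ℕ)) * Wᴴ := by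
      rw [hpow (k:ℕ), hpow (l:ℕ), Matrix.conjTranspose_mul, Matrix.conjTranspose_mul,
        Matrix.conjTranspose_conjTranspose, Matrix.diagonal_conjTranspose,
        ← Matrix.mul_assoc W (diagonal (star fun p => lam p ^ (k:ℕ))) Wᴴ,
        conj_mul_conj _ _ _ hWW, Matrix.diagonal_mul_diagonal]
      have he : (fun i => (star fun p => lam p ^ (k:ℕ)) i * lam i ^ (l:ℕ))
          = fun p => ν p ^ (k:ℕ) * lam p ^ (l:ℕ) := by
        funext p
        rw [Pi.star_apply, star_pow]
      rw [he]
    calc T k l = star (a k : Fin (m+1) → ℂ) ⬝ᵥ (a l : Fin (m+1) → ℂ) := hTa k l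
    _ = star ((Mt ^ (k:ℕ)) *ᵥ a0) ⬝ᵥ ((Mt ^ (l:ℕ)) *ᵥ a0) := by
        rw [← ha0 k k.isLt, ← ha0 l l.isLt]
    _ = (star a0 ᵥ* (Mt ^ (k:ℕ))ᴴ) ⬝ᵥ ((Mt ^ (l:ℕ)) *ᵥ a0) := by rw [Matrix.star_mulVec]
    _ = ((star a0 ᵥ* (Mt ^ (k:ℕ))ᴴ) ᵥ* (Mt ^ (l:ℕ))) ⬝ᵥ a0 := by rw [Matrix.dotProduct_mulVec]
    _ = (star a0 ᵥ* ((Mt ^ (k:ℕ))ᴴ * Mt ^ (l:ℕ))) ⬝ᵥ a0 := by rw [Matrix.vecMul_vecMul]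
    _ = (star a0 ᵥ* (W * diagonal (fun p => ν p ^ (k:ℕ) * lam p ^ (l:ℕ)) * Wᴴ)) ⬝ᵥ a0 := by
        rw [hB]
    _ = star a0 ⬝ᵥ ((W * diagonal (fun p => ν p ^ (k:ℕ) * lam p ^ (l:ℕ)) * Wᴴ) *ᵥ a0) := by
        rw [Matrix.dotProduct_mulVec]
    _ = star a0 ⬝ᵥ (W *ᵥ (diagonal (fun p => ν p ^ (k:ℕ) * lam p ^ (l:ℕ)) *ᵥ g)) := by
        rw [hg, Matrix.mulVec_mulVec, Matrix.mulVec_mulVec]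
    _ = (star a0 ᵥ* W) ⬝ᵥ (diagonal (fun p => ν p ^ (k:ℕ) * lam p ^ (l:ℕ)) *ᵥ g) := by
        rw [Matrix.dotProduct_mulVec]
    _ = star g ⬝ᵥ (diagonal (fun p => ν p ^ (k:ℕ) * lam p ^ (l:ℕ)) *ᵥ g) := by rw [hsg]
    _ = ∑ p, ((Complex.normSq (g p) : ℝ) : ℂ) * ν p ^ (k:ℕ) * (starRingEnd ℂ) (ν p) ^ (l:ℕ) := by
        rw [dotProduct]
        refine Finset.sum_congr rfl fun p _ => ?_
        rw [Matrix.mulVec_diagonal, Pi.star_apply]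
        have hcc : (starRingEnd ℂ) (ν p) = lam p := by
          rw [hν]
          simp [Complex.star_def]
        rw [hcc]
        calc star (g p) * (ν p ^ (k:ℕ) * lam p ^ (l:ℕ) * g p)
            = (g p * star (g p)) * (ν p ^ (k:ℕ) * lam p ^ (l:ℕ)) := by ring
        _ = ((Complex.normSq (g p) : ℝ) : ℂ) * ν p ^ (k:ℕ) * lam p ^ (l:ℕ) := by
            rw [Complex.star_def, Complex.mul_conj, mul_assoc]
  exact endgame T ν (fun p => Complex.normSq (g p)) (fun p => Complex.normSq_nonneg _)
    (fun p => by rw [hν]; simpa [Complex.star_def] using Complex.norm_conj (lam p) ▸ hlamabs p)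
    hMI hrank
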